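/- Every prime ideal of B₁(X) is contained in a unique maximal ideal; consequently B₁(X) is a Gelfand ring. -/

import Mathlib

open Filter Topology

/-- A function `f : X → ℝ` is Baire one if it is a pointwise limit of a
sequence of continuous functions. -/
def IsBaireOne {X : Type*} [TopologicalSpace X] (f : X → ℝ) : Prop :=
  ∃ F : ℕ → C(X, ℝ), ∀ x, Tendsto (fun n => F n x) atTop (𝓝 (f x))

/-- The ring `B₁(X)` of real valued Baire one functions on `X`, as a subring
of the ring of all functions `X → ℝ`. -/
def B1 (X : Type*) [TopologicalSpace X] : Subring (X → ℝ) where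
  carrier := {f | IsBaireOne f}
  zero_mem' := ⟨fun _ => 0, fun x => by simpa using tendsto_const_nhds⟩
  one_mem' := ⟨fun _ => 1, fun x => by simpa using tendsto_const_nhds⟩
  add_mem' := by
    rintro f g ⟨F, hF⟩ ⟨G, hG⟩
    exact ⟨fun n => F n + G n, fun x => by simpa using (hF x).add (hG x)⟩
  mul_mem' := by
    rintro f g ⟨F, hF⟩ ⟨G, hG⟩
    exact ⟨fun n => F n * G n, fun x => by simpa using (hF x).mul (hG x)⟩
  neg_mem' := by
    rintro f ⟨F, hF⟩
    exact ⟨fun n => -F n, fun x => by simpa using (hF x).neg⟩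

variable {X : Type*} [TopologicalSpace X]

/-- The constant function with value `r`, as an element of `B₁(X)`. -/
def bconst (X : Type*) [TopologicalSpace X] (r : ℝ) : B1 X :=
  ⟨fun _ => r, ⟨fun _ => ContinuousMap.const X r, fun x => by simpa using tendsto_const_nhds⟩⟩

theorem babs_mem (f : B1 X) : (fun x => |(f : X → ℝ) x|) ∈ B1 X := by
  obtain ⟨F, hF⟩ := f.2
  exact ⟨fun n => ⟨fun x => |F n x|, (F n).continuous.abs⟩, fun x => (hF x).abs⟩

/-- The absolute value `|f|` of a Baire one function. -/
def babs (f : B1 X) : B1 X := ⟨fun x => |(f : X → ℝ) x|, babs_mem f⟩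

/-- The zero set `Z(f)` of `f ∈ B₁(X)`. -/
def zset (f : B1 X) : Set X := {x | (f : X → ℝ) x = 0}

/-- `Z(B₁(X))`, the family of all zero sets of Baire one functions on `X`. -/
def zsets (X : Type*) [TopologicalSpace X] : Set (Set X) := {Z | ∃ f : B1 X, zset f = Z}

/-- `Z_B[I] = {Z(f) : f ∈ I}` for an ideal `I` of `B₁(X)`. -/
def zbi (I : Ideal (B1 X)) : Set (Set X) := {Z | ∃ f ∈ I, zset f = Z}

/-- A `Z_B`-filter on `X`: a nonempty family of zero sets of Baire one functions,
not containing `∅`, closed under finite intersections and upward closed in `Z(B₁(X))`. -/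
def IsZBFilter (F : Set (Set X)) : Prop :=
  F.Nonempty ∧ F ⊆ zsets X ∧ ∅ ∉ F ∧
    (∀ Z₁ ∈ F, ∀ Z₂ ∈ F, Z₁ ∩ Z₂ ∈ F) ∧
    (∀ Z ∈ F, ∀ Z' ∈ zsets X, Z ⊆ Z' → Z' ∈ F)

/-- A `Z_B`-ultrafilter on `X`: a maximal `Z_B`-filter. -/
def IsZBUltrafilter (U : Set (Set X)) : Prop :=
  IsZBFilter U ∧ ∀ F : Set (Set X), IsZBFilter F → U ⊆ F → F = U

/-- The finite intersection property: every nonempty finite subfamily has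
nonempty intersection. -/
def FIP {X : Type*} (B : Set (Set X)) : Prop :=
  ∀ S : Finset (Set X), ↑S ⊆ B → S.Nonempty → (⋂₀ (S : Set (Set X))).Nonempty

/-- An ideal `I` of `B₁(X)` is a `Z_B`-ideal if `Z_B⁻¹[Z_B[I]] = I`. -/
def IsZBIdeal (I : Ideal (B1 X)) : Prop :=
  ∀ f : B1 X, zset f ∈ zbi I → f ∈ I

/-- An ideal of `B₁(X)` is fixed if the zero sets of its members have a common point. -/
def FixedIdeal (I : Ideal (B1 X)) : Prop :=
  (⋂ f ∈ (I : Set (B1 X)), zset f).Nonempty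

/-- A prime `Z_B`-filter. -/
def IsPrimeZBFilter (F : Set (Set X)) : Prop :=
  IsZBFilter F ∧ ∀ Z₁ ∈ zsets X, ∀ Z₂ ∈ zsets X, Z₁ ∪ Z₂ ∈ F → Z₁ ∈ F ∨ Z₂ ∈ F

/-- `M(f) ≥ 0` in the quotient `B₁(X)/M`: the coset contains a nonnegative function. -/
def QNonneg (M : Ideal (B1 X)) (a : B1 X ⧸ M) : Prop :=
  ∃ g : B1 X, (∀ x, 0 ≤ (g : X → ℝ) x) ∧ Ideal.Quotient.mk M g = a

/-- `M(f) > 0` in the quotient `B₁(X)/M`. -/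
def QPos (M : Ideal (B1 X)) (a : B1 X ⧸ M) : Prop := QNonneg M a ∧ a ≠ 0

/-- A maximal ideal `M` of `B₁(X)` is real if the canonical copy of `ℝ`
(via constant functions) is all of `B₁(X)/M`. -/
def RealIdeal (M : Ideal (B1 X)) : Prop :=
  Function.Surjective (fun r : ℝ => Ideal.Quotient.mk M (bconst X r))

/-- An `F_σ` subset: a countable union of closed sets. -/
def IsFSigma {X : Type*} [TopologicalSpace X] (s : Set X) : Prop :=
  ∃ F : ℕ → Set X, (∀ n, IsClosed (F n)) ∧ s = ⋃ n, F n
theorem bmax_mem (f g : B1 X) :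
    (fun x => max ((f : X → ℝ) x) ((g : X → ℝ) x)) ∈ B1 X := by
  obtain ⟨F, hF⟩ := f.2
  obtain ⟨G, hG⟩ := g.2
  exact ⟨fun n => ⟨fun x => max (F n x) (G n x), (F n).continuous.max (G n).continuous⟩,
    fun x => (hF x).max (hG x)⟩

/-- The pointwise maximum of two Baire one functions. -/
def bmax (f g : B1 X) : B1 X := ⟨_, bmax_mem f g⟩

@[simp] theorem bmax_apply (f g : B1 X) (x : X) :
    ((bmax f g : B1 X) : X → ℝ) x = max ((f : X → ℝ) x) ((g : X → ℝ) x) := rfl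

@[simp] theorem babs_apply (f : B1 X) (x : X) :
    ((babs f : B1 X) : X → ℝ) x = |(f : X → ℝ) x| := rfl

theorem b1_isUnit_of_ne_zero (h : B1 X) (hne : ∀ x, (h : X → ℝ) x ≠ 0) :
    IsUnit h := by
  obtain ⟨H, hH⟩ := h.2
  have hinv : IsBaireOne (fun x => ((h : X → ℝ) x)⁻¹) := by
    refine ⟨fun n => ⟨fun x => H n x / ((H n x) ^ 2 + 1 / (n + 1)), ?_⟩, ?_⟩
    · refine (H n).continuous.div (by continuity) fun x => ?_
      have : (0 : ℝ) < 1 / (n + 1) := by positivity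
      positivity
    · intro x
      have h1 : Tendsto (fun n : ℕ => (1 : ℝ) / (n + 1)) atTop (𝓝 0) :=
        tendsto_one_div_add_atTop_nhds_zero_nat
      have h2 : Tendsto (fun n => (H n x) ^ 2 + 1 / (n + 1 : ℝ)) atTop
          (𝓝 (((h : X → ℝ) x) ^ 2)) := by
        simpa using ((hH x).pow 2).add h1
      have h3 : ((h : X → ℝ) x) ^ 2 ≠ 0 := pow_ne_zero 2 (hne x)
      have := (hH x).div h2 h3
      have heq : (h : X → ℝ) x / ((h : X → ℝ) x) ^ 2 = ((h : X → ℝ) x)⁻¹ := by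
        rw [sq]
        exact div_self_mul_self' ((h : X → ℝ) x)
      rw [heq] at this
      exact this
  refine IsUnit.of_mul_eq_one (a := h) ⟨_, hinv⟩ ?_
  apply Subtype.ext
  funext x
  show (h : X → ℝ) x * ((h : X → ℝ) x)⁻¹ = 1
  exact mul_inv_cancel₀ (hne x)

theorem b1_key {M : Ideal (B1 X)} (hM : M.IsMaximal) {a b : B1 X}
    (ha : a ∈ M) (hb : b ∈ M)
    (hz : ∀ x, (a : X → ℝ) x = 0 → (b : X → ℝ) x ≠ 0) : False := by
  have hmem : a * a + b * b ∈ M := add_mem (M.mul_mem_left a ha) (M.mul_mem_left b hb)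
  have hu : IsUnit (a * a + b * b) := by
    refine b1_isUnit_of_ne_zero _ fun x hx => ?_
    have hx' : (a : X → ℝ) x * (a : X → ℝ) x + (b : X → ℝ) x * (b : X → ℝ) x = 0 := by
      simpa using hx
    have h1 : (a : X → ℝ) x * (a : X → ℝ) x = 0 ∧
        (b : X → ℝ) x * (b : X → ℝ) x = 0 := by
      constructor <;> nlinarith [mul_self_nonneg ((a : X → ℝ) x),
        mul_self_nonneg ((b : X → ℝ) x)]
    exact hz x (mul_self_eq_zero.mp h1.1) (mul_self_eq_zero.mp h1.2)
  exact hM.ne_top (M.eq_top_of_isUnit_mem hmem hu)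

/-- Every prime ideal of `B₁(X)` extends to a unique maximal ideal; hence
`B₁(X)` is a Gelfand ring. -/
theorem b1_gelfand {X : Type*} [TopologicalSpace X]
    (P : Ideal (B1 X)) (hP : P.IsPrime) :
    ∃! M : Ideal (B1 X), M.IsMaximal ∧ P ≤ M := by
  obtain ⟨M, hM, hPM⟩ := P.exists_le_maximal hP.ne_top
  refine ⟨M, ⟨hM, hPM⟩, ?_⟩
  rintro N ⟨hN, hPN⟩
  by_contra hne
  -- N ⊔ M = ⊤
  have hsup : N ⊔ M = ⊤ := by
    by_contra hns
    have h1 : M = N ⊔ M := hM.eq_of_le hns le_sup_right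
    have h2 : N ≤ M := h1 ▸ le_sup_left
    exact hne (hN.eq_of_le hM.ne_top h2)
  have h1 : (1 : B1 X) ∈ N ⊔ M := hsup ▸ Submodule.mem_top
  obtain ⟨g, hg, f, hf, hgf⟩ := Submodule.mem_sup.mp h1
  set u : B1 X := bmax (babs f - babs g) 0 with hu_def
  set v : B1 X := bmax (babs g - babs f) 0 with hv_def
  have huv : u * v = 0 := by
    apply Subtype.ext
    funext x
    show ((u : X → ℝ) x) * ((v : X → ℝ) x) = 0
    have hu1 : (u : X → ℝ) x = max (|(f : X → ℝ) x| - |(g : X → ℝ) x|) 0 := by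
      simp [hu_def]
    have hv1 : (v : X → ℝ) x = max (|(g : X → ℝ) x| - |(f : X → ℝ) x|) 0 := by
      simp [hv_def]
    rcases le_total (|(f : X → ℝ) x|) (|(g : X → ℝ) x|) with hle | hle
    · rw [hu1, max_eq_right (by linarith)]; ring
    · rw [hv1, max_eq_right (by linarith)]; ring
  have hcase : u ∈ P ∨ v ∈ P := hP.mem_or_mem (by rw [huv]; exact P.zero_mem)
  have hsum : ∀ x, (g : X → ℝ) x + (f : X → ℝ) x = 1 := by
    intro x
    have := congrArg (fun h : B1 X => (h : X → ℝ) x) hgf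
    simpa using this
  rcases hcase with hu | hv
  · -- u ∈ P ≤ N, g ∈ N; Z(g) ∩ Z(u) = ∅
    refine b1_key hN hg (hPN hu) fun x hx => ?_
    have hfx : (f : X → ℝ) x = 1 := by have := hsum x; rw [hx] at this; linarith
    have : (u : X → ℝ) x = 1 := by
      simp [hu_def, hfx, hx]
    simp [this]
  · -- v ∈ P ≤ M, f ∈ M
    refine b1_key hM hf (hPM hv) fun x hx => ?_
    have hgx : (g : X → ℝ) x = 1 := by have := hsum x; rw [hx] at this; linarith
    have : (v : X → ℝ) x = 1 := by
      simp [hv_def, hgx, hx]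
    simp [this]
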